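/- Let ε ∈ (0,1). Suppose u, v ∈ ℝ² are unit vectors with angle less than ε between u and the positive x-axis direction, and the linear map A : ℝ² → ℝ² satisfies: A maps the unit vector e₁ to a vector of norm in (1−ε, 1+ε) making angle less than ε with u, and maps e₂ to a vector of norm in (1−ε,1+ε) making angle less than ε with the rotation of u by π/2. Then there is a constant C (independent of A, u, ε) such that ‖A − R_θ‖ ≤ Cε for some rotation R_θ, where ‖·‖ is the operator norm; in particular A is ((1−Cε), (1+Cε))-bilipschitz for ε small enough. -/

import Mathlib

set_option maxHeartbeats 1000000

lemma nsq19 (z : ℂ) : ‖z‖ ^ 2 = z.re ^ 2 + z.im ^ 2 := by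
  rw [Complex.sq_norm, Complex.normSq_apply]; ring

lemma key19 (ε : ℝ) (hε0 : 0 < ε) (hε1 : ε < 1) (w a : ℂ) (hw : ‖w‖ = 1)
    (h1 : 1 - ε < ‖a‖) (h2 : ‖a‖ < 1 + ε)
    (h3 : Real.arccos ((a.re * w.re + a.im * w.im) / (‖a‖ * ‖w‖)) < ε) :
    ‖a - w‖ ≤ 2 * ε := by
  have hc0 : 0 < ‖a‖ := by linarith
  have hca : ‖a‖ ^ 2 = a.re ^ 2 + a.im ^ 2 := nsq19 a
  have hcw : w.re ^ 2 + w.im ^ 2 = 1 := by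
    have := nsq19 w; rw [hw] at this; nlinarith
  have hCS : (a.re * w.re + a.im * w.im) ^ 2 ≤ ‖a‖ ^ 2 := by
    nlinarith [sq_nonneg (a.re * w.im - a.im * w.re)]
  have habs : |a.re * w.re + a.im * w.im| ≤ ‖a‖ := by
    rw [abs_le]; constructor <;> nlinarith
  rw [hw, mul_one] at h3
  have hx1 : (a.re * w.re + a.im * w.im) / ‖a‖ ≤ 1 := by
    rw [div_le_one hc0]; exact (abs_le.mp habs).2
  have hx2 : -1 ≤ (a.re * w.re + a.im * w.im) / ‖a‖ := by
    rw [le_div_iff₀ hc0]; nlinarith [(abs_le.mp habs).1]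
  have hcos : Real.cos ε < (a.re * w.re + a.im * w.im) / ‖a‖ := by
    have h := Real.cos_lt_cos_of_nonneg_of_le_pi (Real.arccos_nonneg _)
      (by linarith [Real.pi_gt_three]) h3
    rwa [Real.cos_arccos hx2 hx1] at h
  have hcosε : (1 : ℝ) - ε ^ 2 / 2 ≤ Real.cos ε := Real.one_sub_sq_div_two_le_cos
  have hDlb : ‖a‖ * (1 - ε ^ 2 / 2) < a.re * w.re + a.im * w.im := by
    have h' := mul_lt_mul_of_pos_left hcos hc0
    rw [mul_div_cancel₀ _ (ne_of_gt hc0)] at h'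
    nlinarith
  have hnorm : ‖a - w‖ ^ 2 = ‖a‖ ^ 2 - 2 * (a.re * w.re + a.im * w.im) + 1 := by
    have h := nsq19 (a - w)
    simp only [Complex.sub_re, Complex.sub_im] at h
    rw [h]; nlinarith
  have hsq : ‖a - w‖ ^ 2 ≤ (2 * ε) ^ 2 := by nlinarith [sq_nonneg (‖a‖ - 1)]
  nlinarith [norm_nonneg (a - w)]


/-- If a linear map `A : ℝ² → ℝ²` (modelled on `ℂ`) sends the standard orthonormal
frame `(1, i)` to a frame of vectors with norms in `(1-ε, 1+ε)` making angles `< ε`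
with `u` and with `i·u` respectively, where `u` is a unit vector at angle `< ε` from
the positive `x`-axis, then `A` is within operator-norm distance `Cε` of some
rotation `z ↦ e^{iθ} z`, for a universal constant `C`; in particular `A` is
`(1-Cε, 1+Cε)`-bilipschitz when `Cε < 1`.  (Angle between vectors `a, b` is
`arccos(⟨a,b⟩/(‖a‖‖b‖))`.) -/
theorem stmt19 :
    ∃ C : ℝ, 0 < C ∧
      ∀ ε : ℝ, 0 < ε → ε < 1 →
      ∀ u : ℂ, ‖u‖ = 1 →
      Real.arccos u.re < ε →
      ∀ A : ℂ →L[ℝ] ℂ,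
        (1 - ε < ‖A 1‖ ∧ ‖A 1‖ < 1 + ε ∧
          Real.arccos (((A 1).re * u.re + (A 1).im * u.im) / (‖A 1‖ * ‖u‖)) < ε) →
        (1 - ε < ‖A Complex.I‖ ∧ ‖A Complex.I‖ < 1 + ε ∧
          Real.arccos (((A Complex.I).re * (Complex.I * u).re +
              (A Complex.I).im * (Complex.I * u).im) / (‖A Complex.I‖ * ‖Complex.I * u‖)) < ε) →
        ∃ θ : ℝ,
          ‖A - ContinuousLinearMap.mul ℝ ℂ (Complex.exp ((θ : ℂ) * Complex.I))‖ ≤ C * ε ∧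
          (C * ε < 1 → ∀ z : ℂ,
            (1 - C*ε) * ‖z‖ ≤ ‖A z‖ ∧ ‖A z‖ ≤ (1 + C*ε) * ‖z‖) := by
  refine ⟨4, by norm_num, ?_⟩
  intro ε hε0 hε1 u hu huarg A ⟨h11, h12, h13⟩ ⟨h21, h22, h23⟩
  have hIu : ‖Complex.I * u‖ = 1 := by rw [norm_mul, Complex.norm_I, hu, one_mul]
  have k1 : ‖A 1 - u‖ ≤ 2 * ε := key19 ε hε0 hε1 u (A 1) hu h11 h12 h13
  have k2 : ‖A Complex.I - Complex.I * u‖ ≤ 2 * ε :=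
    key19 ε hε0 hε1 (Complex.I * u) (A Complex.I) hIu h21 h22 h23
  refine ⟨u.arg, ?_⟩
  have he : Complex.exp ((u.arg : ℂ) * Complex.I) = u := by
    have h := Complex.norm_mul_exp_arg_mul_I u
    rw [hu] at h
    simpa using h
  have hA : ∀ z : ℂ, A z = (z.re : ℂ) * A 1 + (z.im : ℂ) * A Complex.I := by
    intro z
    calc A z = A (z.re • (1 : ℂ) + z.im • Complex.I) := by
            rw [show z.re • (1 : ℂ) + z.im • Complex.I = z by
              simp [Complex.real_smul, Complex.re_add_im]]
      _ = z.re • A 1 + z.im • A Complex.I := by rw [map_add, map_smul, map_smul]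
      _ = _ := by rw [Complex.real_smul, Complex.real_smul]
  have key : ∀ z : ℂ, ‖A z - u * z‖ ≤ 4 * ε * ‖z‖ := by
    intro z
    have hdec : A z - u * z = (z.re : ℂ) * (A 1 - u) + (z.im : ℂ) * (A Complex.I - Complex.I * u) := by
      have huz2 : u * z = (z.re : ℂ) * u + (z.im : ℂ) * (Complex.I * u) := by
        conv_lhs => rw [← Complex.re_add_im z]
        ring
      rw [hA z, huz2]
      ring
    calc ‖A z - u * z‖
        ≤ ‖(z.re : ℂ) * (A 1 - u)‖ + ‖(z.im : ℂ) * (A Complex.I - Complex.I * u)‖ := by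
          rw [hdec]; exact norm_add_le _ _
      _ = |z.re| * ‖A 1 - u‖ + |z.im| * ‖A Complex.I - Complex.I * u‖ := by
          rw [norm_mul, norm_mul, Complex.norm_real, Complex.norm_real,
            Real.norm_eq_abs, Real.norm_eq_abs]
      _ ≤ ‖z‖ * (2 * ε) + ‖z‖ * (2 * ε) := by
          have hre : |z.re| ≤ ‖z‖ := by
            exact Complex.abs_re_le_norm z
          have him : |z.im| ≤ ‖z‖ := by
            exact Complex.abs_im_le_norm z
          gcongr <;> positivity
      _ = 4 * ε * ‖z‖ := by ring
  have hop : ‖A - ContinuousLinearMap.mul ℝ ℂ (Complex.exp ((u.arg : ℂ) * Complex.I))‖ ≤ 4 * ε := by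
    apply ContinuousLinearMap.opNorm_le_bound _ (by positivity)
    intro z
    simpa [ContinuousLinearMap.sub_apply, ContinuousLinearMap.mul_apply', he] using key z
  refine ⟨hop, ?_⟩
  intro _ z
  have h := key z
  have huz : ‖u * z‖ = ‖z‖ := by rw [norm_mul, hu, one_mul]
  constructor
  · have h2 := norm_sub_norm_le (u * z) (A z)
    rw [huz, norm_sub_rev] at h2
    nlinarith [norm_nonneg z]
  · have h2 := norm_sub_norm_le (A z) (u * z)
    rw [huz] at h2
    nlinarith [norm_nonneg z]
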